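/- arXiv:0804.3611 — 4 statements merged into one kernel-verified Lean document; each statement's English description precedes it below -/
import Mathlib

section
/- For every integer ℓ ≥ 1 and real x with |x| < 1, ∑_{k=1}^∞ (∏_{j=0}^{ℓ-1} (k^2 - j^2)) x^k = ((2ℓ)!/2) · x^ℓ(1+x)/(1-x)^{2ℓ+1}. -/
open Finset Nat

private lemma asc_prod (n : ℕ) : ∀ k : ℕ, n.ascFactorial k = ∏ j ∈ range k, (n + j)
  | 0 => by simp
  | k + 1 => by
      rw [Nat.ascFactorial_succ, Finset.prod_range_succ, asc_prod n k, Nat.mul_comm]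

private lemma prod_eq_desc_asc (ℓ m : ℕ) :
    ∏ j ∈ range ℓ, ((m + ℓ) ^ 2 - j ^ 2) =
      (m + ℓ).descFactorial ℓ * (m + ℓ).ascFactorial ℓ := by
  rw [Nat.descFactorial_eq_prod_range, asc_prod, ← Finset.prod_mul_distrib]
  refine Finset.prod_congr rfl fun j hj => ?_
  rw [Nat.sq_sub_sq, Nat.mul_comm]

private lemma key_nat (ℓ m : ℕ) (hℓ : 1 ≤ ℓ) :
    2 * ((m + ℓ).descFactorial ℓ * (m + ℓ).ascFactorial ℓ) =
      (2 * ℓ)! * ((m + 2 * ℓ).choose (2 * ℓ) + (m + 2 * ℓ - 1).choose (2 * ℓ)) := by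
  apply Nat.eq_of_mul_eq_mul_left
    (Nat.mul_pos m.factorial_pos (m + ℓ - 1).factorial_pos)
  have h1 : m ! * (m + ℓ).descFactorial ℓ = (m + ℓ)! := by
    have := Nat.factorial_mul_descFactorial (show ℓ ≤ m + ℓ by omega)
    simpa using this
  have h2 : (m + ℓ - 1)! * (m + ℓ).ascFactorial ℓ = (m + 2 * ℓ - 1)! := by
    have := Nat.factorial_mul_ascFactorial' (m + ℓ) ℓ (by omega)
    rwa [show m + ℓ + ℓ - 1 = m + 2 * ℓ - 1 by omega] at this
  have h3 : m ! * ((2 * ℓ)! * (m + 2 * ℓ).choose (2 * ℓ)) = (m + 2 * ℓ)! := by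
    rw [← Nat.descFactorial_eq_factorial_mul_choose]
    have := Nat.factorial_mul_descFactorial (show 2 * ℓ ≤ m + 2 * ℓ by omega)
    simpa using this
  have h4 : m ! * ((2 * ℓ)! * (m + 2 * ℓ - 1).choose (2 * ℓ)) = m * (m + 2 * ℓ - 1)! := by
    rw [← Nat.descFactorial_eq_factorial_mul_choose]
    rcases Nat.eq_zero_or_pos m with rfl | hm
    · rw [Nat.descFactorial_eq_zero_iff_lt.2 (show 0 + 2 * ℓ - 1 < 2 * ℓ by omega)]
      simp
    · have hdesc := Nat.factorial_mul_descFactorial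
        (show 2 * ℓ ≤ m + 2 * ℓ - 1 by omega)
      rw [show m + 2 * ℓ - 1 - 2 * ℓ = m - 1 by omega] at hdesc
      calc m ! * (m + 2 * ℓ - 1).descFactorial (2 * ℓ)
          = m * ((m - 1)! * (m + 2 * ℓ - 1).descFactorial (2 * ℓ)) := by
            rw [← Nat.mul_assoc, Nat.mul_factorial_pred hm.ne']
        _ = m * (m + 2 * ℓ - 1)! := by rw [hdesc]
  have hf1 : (m + ℓ)! = (m + ℓ) * (m + ℓ - 1)! :=
    (Nat.mul_factorial_pred (by omega)).symm
  have hf2 : (m + 2 * ℓ)! = (m + 2 * ℓ) * (m + 2 * ℓ - 1)! :=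
    (Nat.mul_factorial_pred (by omega)).symm
  calc m ! * (m + ℓ - 1)! *
        (2 * ((m + ℓ).descFactorial ℓ * (m + ℓ).ascFactorial ℓ))
      = 2 * ((m ! * (m + ℓ).descFactorial ℓ) *
          ((m + ℓ - 1)! * (m + ℓ).ascFactorial ℓ)) := by ring
    _ = 2 * ((m + ℓ)! * (m + 2 * ℓ - 1)!) := by rw [h1, h2]
    _ = (2 * (m + ℓ)) * ((m + ℓ - 1)! * (m + 2 * ℓ - 1)!) := by rw [hf1]; ring
    _ = ((m + 2 * ℓ) + m) * ((m + ℓ - 1)! * (m + 2 * ℓ - 1)!) := by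
        rw [show 2 * (m + ℓ) = (m + 2 * ℓ) + m by omega]
    _ = (m + ℓ - 1)! * (m + 2 * ℓ)! + (m + ℓ - 1)! * (m * (m + 2 * ℓ - 1)!) := by
        rw [hf2]; ring
    _ = (m + ℓ - 1)! * (m ! * ((2 * ℓ)! * (m + 2 * ℓ).choose (2 * ℓ))) +
        (m + ℓ - 1)! * (m ! * ((2 * ℓ)! * (m + 2 * ℓ - 1).choose (2 * ℓ))) := by
        rw [h3, h4]
    _ = m ! * (m + ℓ - 1)! *
        ((2 * ℓ)! * ((m + 2 * ℓ).choose (2 * ℓ) + (m + 2 * ℓ - 1).choose (2 * ℓ))) := by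
        ring

theorem stmt_5 (ℓ : ℕ) (hℓ : 1 ≤ ℓ) (x : ℝ) (hx : |x| < 1) :
    ∑' k : ℕ, (∏ j ∈ range ℓ, (((k + 1 : ℕ) : ℝ) ^ 2 - (j : ℝ) ^ 2)) * x ^ (k + 1) =
      ((2 * ℓ)! / 2 : ℝ) * (x ^ ℓ * (1 + x) / (1 - x) ^ (2 * ℓ + 1)) := by
  have hx' : ‖x‖ < 1 := by rwa [Real.norm_eq_abs]
  set g : ℕ → ℝ := fun k => (∏ j ∈ range ℓ, (((k + 1 : ℕ) : ℝ) ^ 2 - (j : ℝ) ^ 2)) * x ^ (k + 1)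
    with hg
  set T : ℝ := ((2 * ℓ)! / 2 : ℝ) * (x ^ ℓ * (1 + x) / (1 - x) ^ (2 * ℓ + 1)) with hT
  have h1 : HasSum (fun m : ℕ => (((m + 2 * ℓ).choose (2 * ℓ) : ℕ) : ℝ) * x ^ m)
      (1 / (1 - x) ^ (2 * ℓ + 1)) :=
    hasSum_choose_mul_geometric_of_norm_lt_one (2 * ℓ) hx'
  have h2 : HasSum (fun m : ℕ => (((m + 2 * ℓ - 1).choose (2 * ℓ) : ℕ) : ℝ) * x ^ m)
      (x * (1 / (1 - x) ^ (2 * ℓ + 1))) := by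
    have h2' : HasSum
        (fun n : ℕ => (((n + 1 + 2 * ℓ - 1).choose (2 * ℓ) : ℕ) : ℝ) * x ^ (n + 1))
        (x * (1 / (1 - x) ^ (2 * ℓ + 1))) := by
      have heq : (fun n : ℕ => (((n + 1 + 2 * ℓ - 1).choose (2 * ℓ) : ℕ) : ℝ) * x ^ (n + 1)) =
          fun n : ℕ => x * ((((n + 2 * ℓ).choose (2 * ℓ) : ℕ) : ℝ) * x ^ n) := by
        funext n
        rw [show n + 1 + 2 * ℓ - 1 = n + 2 * ℓ by omega]
        ring
      rw [heq]
      exact h1.mul_left x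
    have := (hasSum_nat_add_iff (f := fun m : ℕ =>
      (((m + 2 * ℓ - 1).choose (2 * ℓ) : ℕ) : ℝ) * x ^ m) 1).1 h2'
    simpa [Nat.choose_eq_zero_of_lt (show 2 * ℓ - 1 < 2 * ℓ by omega)] using this
  have h3 : HasSum (fun m : ℕ =>
      (((2 * ℓ)! / 2 : ℝ) * x ^ ℓ) *
        (((((m + 2 * ℓ).choose (2 * ℓ) : ℕ) : ℝ) * x ^ m) +
          ((((m + 2 * ℓ - 1).choose (2 * ℓ) : ℕ) : ℝ) * x ^ m))) T := by
    have := (h1.add h2).mul_left (((2 * ℓ)! / 2 : ℝ) * x ^ ℓ)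
    have e : T = ((2 * ℓ)! / 2 : ℝ) * x ^ ℓ *
        (1 / (1 - x) ^ (2 * ℓ + 1) + x * (1 / (1 - x) ^ (2 * ℓ + 1))) := by
      rw [hT]; ring
    rw [e]
    exact this
  have hterm : ∀ m : ℕ, g (m + (ℓ - 1)) =
      (((2 * ℓ)! / 2 : ℝ) * x ^ ℓ) *
        (((((m + 2 * ℓ).choose (2 * ℓ) : ℕ) : ℝ) * x ^ m) +
          ((((m + 2 * ℓ - 1).choose (2 * ℓ) : ℕ) : ℝ) * x ^ m)) := by
    intro m
    have hidx : m + (ℓ - 1) + 1 = m + ℓ := by omega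
    have hprod : (∏ j ∈ range ℓ, (((m + ℓ : ℕ) : ℝ) ^ 2 - (j : ℝ) ^ 2)) =
        ((∏ j ∈ range ℓ, ((m + ℓ) ^ 2 - j ^ 2) : ℕ) : ℝ) := by
      rw [Nat.cast_prod]
      refine Finset.prod_congr rfl fun j hj => ?_
      have hj' : j ^ 2 ≤ (m + ℓ) ^ 2 :=
        Nat.pow_le_pow_left (by simp only [mem_range] at hj; omega) 2
      push_cast [Nat.cast_sub hj']
      ring
    have hkey := key_nat ℓ m hℓ
    have hkeyR : ((∏ j ∈ range ℓ, ((m + ℓ) ^ 2 - j ^ 2) : ℕ) : ℝ) =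
        ((2 * ℓ)! / 2 : ℝ) *
          ((((m + 2 * ℓ).choose (2 * ℓ) : ℕ) : ℝ) +
            (((m + 2 * ℓ - 1).choose (2 * ℓ) : ℕ) : ℝ)) := by
      rw [prod_eq_desc_asc]
      have := congrArg (fun n : ℕ => (n : ℝ)) hkey
      push_cast at this ⊢
      linarith
    rw [hg]
    simp only
    rw [hidx, hprod, hkeyR, show m + ℓ = ℓ + m by omega, pow_add]
    ring
  have h4 : HasSum (fun m : ℕ => g (m + (ℓ - 1))) T := by
    rw [show (fun m : ℕ => g (m + (ℓ - 1))) = _ from funext hterm]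
    exact h3
  have h5 := (hasSum_nat_add_iff (f := g) (ℓ - 1)).1 h4
  have hzero : ∑ i ∈ range (ℓ - 1), g i = 0 := by
    refine Finset.sum_eq_zero fun i hi => ?_
    simp only [mem_range] at hi
    have hmem : i + 1 ∈ range ℓ := by simp only [mem_range]; omega
    rw [hg]
    simp only
    rw [Finset.prod_eq_zero hmem (by push_cast; ring), zero_mul]
  rw [hzero, add_zero] at h5
  exact h5.tsum_eq
end

section
/- For every integer ℓ ≥ 1 and real x with |x| < 1, ∑_{k=1}^∞ (2k+1)·(∏_{j=0}^{ℓ-1} (k-j)(k+1+j)) x^k = (2ℓ+1)! · x^ℓ(1+x)/(1-x)^{2ℓ+2}. -/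
open Finset Nat

-- Nat identity for ℓ ≤ k
lemma aux_nat (ℓ k : ℕ) (h : ℓ ≤ k) :
    (2 * k + 1) * (k.descFactorial ℓ * (k + 1).ascFactorial ℓ) =
      (2 * ℓ + 1)! * ((k + ℓ + 1).choose (2 * ℓ + 1) + (k + ℓ).choose (2 * ℓ + 1)) := by
  have h1 : (k + ℓ).descFactorial (2 * ℓ) = (k + ℓ).descFactorial ℓ * k.descFactorial ℓ := by
    rw [descFactorial_eq_prod_range, descFactorial_eq_prod_range, descFactorial_eq_prod_range,
      two_mul, prod_range_add]
    congr 1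
    exact Finset.prod_congr rfl fun i _ => by omega
  have h2 : (k + ℓ + 1).descFactorial (2 * ℓ + 1) = (k + ℓ + 1) * (k + ℓ).descFactorial (2 * ℓ) :=
    succ_descFactorial_succ _ _
  have h3 : (k + ℓ).descFactorial (2 * ℓ + 1) = (k - ℓ) * (k + ℓ).descFactorial (2 * ℓ) := by
    rw [descFactorial_succ]
    congr 1
    omega
  have h4 : (2 * ℓ + 1)! * ((k + ℓ + 1).choose (2 * ℓ + 1) + (k + ℓ).choose (2 * ℓ + 1)) =
      (k + ℓ + 1).descFactorial (2 * ℓ + 1) + (k + ℓ).descFactorial (2 * ℓ + 1) := by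
    rw [Nat.mul_add, descFactorial_eq_factorial_mul_choose, descFactorial_eq_factorial_mul_choose]
  rw [h4, h2, h3, ← Nat.add_descFactorial_eq_ascFactorial k ℓ,
    mul_comm (k.descFactorial ℓ), ← h1, ← Nat.add_mul]
  congr 1
  omega

lemma asc_prod_s6 (a : ℕ) : ∀ ℓ : ℕ, a.ascFactorial ℓ = ∏ i ∈ range ℓ, (a + i)
  | 0 => by simp
  | n + 1 => by rw [ascFactorial_succ, prod_range_succ, asc_prod_s6 a n, mul_comm]

-- Real per-term identity for all k, ℓ ≥ 1
lemma aux_real (ℓ : ℕ) (hℓ : 1 ≤ ℓ) (k : ℕ) :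
    (2 * (k : ℝ) + 1) * (∏ j ∈ range ℓ, ((k : ℝ) - j) * ((k : ℝ) + 1 + j)) =
      ((2 * ℓ + 1)! : ℝ) * (((k + ℓ + 1).choose (2 * ℓ + 1) : ℝ) + ((k + ℓ).choose (2 * ℓ + 1) : ℝ)) := by
  rcases lt_or_ge k ℓ with hk | hk
  · have hz : (∏ j ∈ range ℓ, ((k : ℝ) - j) * ((k : ℝ) + 1 + j)) = 0 := by
      apply Finset.prod_eq_zero (Finset.mem_range.mpr hk)
      simp
    rw [hz, Nat.choose_eq_zero_of_lt (by omega), Nat.choose_eq_zero_of_lt (by omega)]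
    ring
  · have hp : (∏ j ∈ range ℓ, ((k : ℝ) - j) * ((k : ℝ) + 1 + j)) =
        ((k.descFactorial ℓ * (k + 1).ascFactorial ℓ : ℕ) : ℝ) := by
      rw [Finset.prod_mul_distrib, Nat.cast_mul, descFactorial_eq_prod_range,
        asc_prod_s6, Nat.cast_prod, Nat.cast_prod]
      congr 1
      · exact Finset.prod_congr rfl fun i hi => by
          have : i ≤ k := le_trans (le_of_lt (Finset.mem_range.mp hi)) hk
          push_cast [this]; ring
      · exact Finset.prod_congr rfl fun i _ => by push_cast; ring
    rw [hp]
    have := aux_nat ℓ k hk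
    have := congrArg (fun n : ℕ => (n : ℝ)) this
    push_cast at this ⊢
    linarith [this]

theorem stmt_6 (ℓ : ℕ) (hℓ : 1 ≤ ℓ) (x : ℝ) (hx : |x| < 1) :
    ∑' k : ℕ, (2 * ((k + 1 : ℕ) : ℝ) + 1) *
        (∏ j ∈ range ℓ, ((((k + 1 : ℕ) : ℝ)) - j) * (((k + 1 : ℕ) : ℝ) + 1 + j)) * x ^ (k + 1) =
      ((2 * ℓ + 1)! : ℝ) * (x ^ ℓ * (1 + x) / (1 - x) ^ (2 * ℓ + 2)) := by
  have hx' : ‖x‖ < 1 := by rwa [Real.norm_eq_abs]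
  set G : ℕ → ℝ := fun m => (2 * (m : ℝ) + 1) *
      (∏ j ∈ range ℓ, ((m : ℝ) - j) * ((m : ℝ) + 1 + j)) * x ^ m with hG
  -- base has-sum
  have hbase : HasSum (fun n : ℕ => ((n + (2 * ℓ + 1)).choose (2 * ℓ + 1) : ℝ) * x ^ n)
      (1 / (1 - x) ^ (2 * ℓ + 2)) := by
    have := hasSum_choose_mul_geometric_of_norm_lt_one (𝕜 := ℝ) (2 * ℓ + 1) hx'
    convert this using 2
  -- f sum
  set f : ℕ → ℝ := fun m => ((m + ℓ + 1).choose (2 * ℓ + 1) : ℝ) * x ^ m with hf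
  set g : ℕ → ℝ := fun m => ((m + ℓ).choose (2 * ℓ + 1) : ℝ) * x ^ m with hg
  have hfs : HasSum f (x ^ ℓ / (1 - x) ^ (2 * ℓ + 2)) := by
    have h1 : HasSum (fun n : ℕ => f (n + ℓ)) (x ^ ℓ * (1 / (1 - x) ^ (2 * ℓ + 2))) := by
      have H := hbase.mul_left (x ^ ℓ)
      have e : (fun n : ℕ => f (n + ℓ)) =
          fun n : ℕ => x ^ ℓ * (((n + (2 * ℓ + 1)).choose (2 * ℓ + 1) : ℝ) * x ^ n) := by
        funext n
        simp only [hf]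
        rw [show n + ℓ + ℓ + 1 = n + (2 * ℓ + 1) by omega, pow_add]
        ring
      rw [e]; exact H
    have := (hasSum_nat_add_iff (f := f) ℓ).mp h1
    have hzero : ∑ i ∈ range ℓ, f i = 0 := by
      apply Finset.sum_eq_zero
      intro i hi
      have : i + ℓ + 1 < 2 * ℓ + 1 := by have := Finset.mem_range.mp hi; omega
      simp [hf, Nat.choose_eq_zero_of_lt this]
    rw [hzero, add_zero] at this
    rw [show x ^ ℓ / (1 - x) ^ (2 * ℓ + 2) = x ^ ℓ * (1 / (1 - x) ^ (2 * ℓ + 2)) by ring]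
    exact this
  have hgs : HasSum g (x ^ (ℓ + 1) / (1 - x) ^ (2 * ℓ + 2)) := by
    have h1 : HasSum (fun n : ℕ => g (n + (ℓ + 1))) (x ^ (ℓ + 1) * (1 / (1 - x) ^ (2 * ℓ + 2))) := by
      have H := hbase.mul_left (x ^ (ℓ + 1))
      have e : (fun n : ℕ => g (n + (ℓ + 1))) =
          fun n : ℕ => x ^ (ℓ + 1) * (((n + (2 * ℓ + 1)).choose (2 * ℓ + 1) : ℝ) * x ^ n) := by
        funext n
        simp only [hg]
        rw [show n + (ℓ + 1) + ℓ = n + (2 * ℓ + 1) by omega, pow_add]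
        ring
      rw [e]; exact H
    have := (hasSum_nat_add_iff (f := g) (ℓ + 1)).mp h1
    have hzero : ∑ i ∈ range (ℓ + 1), g i = 0 := by
      apply Finset.sum_eq_zero
      intro i hi
      have : i + ℓ < 2 * ℓ + 1 := by have := Finset.mem_range.mp hi; omega
      simp [hg, Nat.choose_eq_zero_of_lt this]
    rw [hzero, add_zero] at this
    rw [show x ^ (ℓ + 1) / (1 - x) ^ (2 * ℓ + 2) = x ^ (ℓ + 1) * (1 / (1 - x) ^ (2 * ℓ + 2)) by ring]
    exact this
  have hGsum : HasSum G (((2 * ℓ + 1)! : ℝ) * (x ^ ℓ * (1 + x) / (1 - x) ^ (2 * ℓ + 2))) := by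
    have := ((hfs.add hgs).mul_left ((2 * ℓ + 1)! : ℝ))
    convert this using 1
    · rfl
    · funext m
      simp only [hf, hg, hG]
      have := aux_real ℓ hℓ m
      calc (2 * (m : ℝ) + 1) * (∏ j ∈ range ℓ, ((m : ℝ) - j) * ((m : ℝ) + 1 + j)) * x ^ m
          = ((2 * ℓ + 1)! : ℝ) * (((m + ℓ + 1).choose (2 * ℓ + 1) : ℝ)
            + ((m + ℓ).choose (2 * ℓ + 1) : ℝ)) * x ^ m := by rw [this]
        _ = _ := by ring
    · rw [pow_succ]; ring
  have hG0 : G 0 = 0 := by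
    simp only [hG, Nat.cast_zero]
    rw [Finset.prod_eq_zero (Finset.mem_range.mpr (by omega : 0 < ℓ))
      (by norm_num : ((0 : ℝ) - ((0 : ℕ) : ℝ)) * ((0 : ℝ) + 1 + ((0 : ℕ) : ℝ)) = 0)]
    ring
  have hshift : HasSum (fun k : ℕ => G (k + 1))
      (((2 * ℓ + 1)! : ℝ) * (x ^ ℓ * (1 + x) / (1 - x) ^ (2 * ℓ + 2))) := by
    apply (hasSum_nat_add_iff (f := G) 1).mpr
    simpa [hG0] using hGsum
  exact hshift.tsum_eq
end

section
/- Define c_{2k,2ℓ} = ((-1)^{k+ℓ}/((2ℓ)!/2)) ∏_{j=0}^{ℓ-1}(k^2-j^2) for 1 ≤ ℓ ≤ k, c_{2k,0} = 2(-1)^k for k ≥ 1, c_{0,0} = 0, and c_{2k+1,2ℓ+1} = ((-1)^{k+ℓ}(2k+1)/((2ℓ+1)!)) ∏_{j=0}^{ℓ-1}(k-j)(k+1+j) for 0 ≤ ℓ ≤ k. Then for all integers 0 ≤ ℓ < k, c_{2k+1,2ℓ+1} = c_{2k,2ℓ} - c_{2k-1,2ℓ+1}. -/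
open Finset Nat

/-- The coefficients `c_{m,r}`: zero when `m` and `r` have different parity or `m < r`;
`c_{0,0} = 0`; `c_{2k,0} = 2(-1)^k` for `k ≥ 1`;
`c_{2k,2ℓ} = ((-1)^{k+ℓ}/((2ℓ)!/2)) ∏_{j=0}^{ℓ-1}(k²-j²)` for `1 ≤ ℓ ≤ k`;
`c_{2k+1,2ℓ+1} = ((-1)^{k+ℓ}(2k+1)/((2ℓ+1)!)) ∏_{j=0}^{ℓ-1}(k-j)(k+1+j)` for `0 ≤ ℓ ≤ k`. -/
def c (m r : ℕ) : ℚ :=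
  if m % 2 ≠ r % 2 ∨ m < r then 0
  else if m = 0 then 0
  else if m % 2 = 0 then
    (if r = 0 then 2 * (-1) ^ (m / 2)
     else ((-1) ^ (m / 2 + r / 2) / (((2 * (r / 2))! : ℚ) / 2)) *
        ∏ j ∈ range (r / 2), (((m / 2 : ℕ) : ℚ) ^ 2 - (j : ℚ) ^ 2))
  else
    ((-1) ^ (m / 2 + r / 2) * (2 * ((m / 2 : ℕ) : ℚ) + 1) / ((2 * (r / 2) + 1)! : ℚ)) *
      ∏ j ∈ range (r / 2), (((m / 2 : ℕ) : ℚ) - j) * (((m / 2 : ℕ) : ℚ) + 1 + j)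

theorem stmt_12 (k ℓ : ℕ) (hℓk : ℓ < k) :
    c (2 * k + 1) (2 * ℓ + 1) = c (2 * k) (2 * ℓ) - c (2 * k - 1) (2 * ℓ + 1) := by
  obtain ⟨k', rfl⟩ : ∃ k', k = k' + 1 := ⟨k - 1, by omega⟩
  have h1 : 2 * (k' + 1) - 1 = 2 * k' + 1 := by omega
  rw [h1]
  unfold c
  have e1 : (2 * (k' + 1) + 1) % 2 = 1 := by omega
  have e2 : (2 * ℓ + 1) % 2 = 1 := by omega
  have e3 : (2 * (k' + 1)) % 2 = 0 := by omega
  have e4 : (2 * ℓ) % 2 = 0 := by omega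
  have e5 : (2 * k' + 1) % 2 = 1 := by omega
  have d1 : (2 * (k' + 1) + 1) / 2 = k' + 1 := by omega
  have d2 : (2 * ℓ + 1) / 2 = ℓ := by omega
  have d3 : (2 * (k' + 1)) / 2 = k' + 1 := by omega
  have d4 : (2 * ℓ) / 2 = ℓ := by omega
  have d5 : (2 * k' + 1) / 2 = k' := by omega
  have n1 : ¬ (2 * (k' + 1) + 1 < 2 * ℓ + 1) := by omega
  have n2 : ¬ (2 * (k' + 1) < 2 * ℓ) := by omega
  have n3 : ¬ (2 * k' + 1 < 2 * ℓ + 1) := by omega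
  simp only [e1, e2, e3, e4, e5, d1, d2, d3, d4, d5, n1, n2, n3, if_false, or_false,
    ne_eq, not_true_eq_false, OfNat.ofNat_ne_zero, ite_false, one_ne_zero,
    Nat.add_eq_zero, and_false, false_or, not_false_eq_true, ite_true]
  rw [if_neg (by omega : ¬ 2 * (k' + 1) = 0)]
  rcases ℓ with _ | m
  · simp [Nat.factorial, pow_succ]
    ring
  · rw [if_neg (by omega : ¬ 2 * (m + 1) = 0)]
    push_cast
    set x : ℚ := ((k' : ℚ) + 1) with hx
    have hA : ∀ n : ℕ, (∏ j ∈ range (n+1), ((x : ℚ) - j) * (x + 1 + j))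
        = (x * ∏ j ∈ range n, (x - (j+1))) * ((∏ j ∈ range n, (x + (j+1))) * (x + 1 + n)) := by
      intro n
      rw [prod_mul_distrib, prod_range_succ', prod_range_succ]
      push_cast
      rw [prod_congr rfl (fun j _ => by ring :
        ∀ j ∈ range n, x + 1 + (j:ℚ) = x + ((j:ℚ)+1))]
      ring
    have hB : ∀ n : ℕ, (∏ j ∈ range (n+1), ((x : ℚ)^2 - (j:ℚ)^2))
        = (x * ∏ j ∈ range n, (x - (j+1))) * (x * ∏ j ∈ range n, (x + (j+1))) := by
      intro n
      rw [prod_congr rfl (fun j _ => by ring :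
        ∀ j ∈ range (n+1), (x:ℚ)^2 - (j:ℚ)^2 = (x - j) * (x + j)), prod_mul_distrib,
        prod_range_succ', prod_range_succ']
      push_cast
      ring
    have hC : ∀ n : ℕ, (∏ j ∈ range (n+1), (((k':ℚ)) - j) * (x + j))
        = ((∏ j ∈ range n, (x - (j+1))) * ((k':ℚ) - n)) * (x * ∏ j ∈ range n, (x + (j+1))) := by
      intro n
      rw [prod_mul_distrib, prod_range_succ, prod_range_succ']
      rw [prod_congr rfl (fun j _ => by rw [hx]; ring :
        ∀ j ∈ range n, (k':ℚ) - (j:ℚ) = x - ((j:ℚ)+1))]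
      push_cast
      ring
    rw [hA m, hB m, hC m]
    have hfac : ((2 * (m + 1) + 1)! : ℚ) = (2 * (m+1) + 1) * ((2 * (m+1))! : ℚ) := by
      rw [Nat.factorial_succ]; push_cast; ring
    rw [hfac]
    have hne : ((2 * (m+1))! : ℚ) ≠ 0 := by
      exact_mod_cast Nat.factorial_ne_zero _
    field_simp
    ring
end

section
/- For every integer ℓ ≥ 1, applying the operator (x d/dx)^2 - ℓ^2 to the function x^ℓ(1+x)/(1-x)^{2ℓ+1} yields (2ℓ+2)(2ℓ+1) · x^{ℓ+1}(1+x)/(1-x)^{2ℓ+3}, for all real x with |x| < 1. -/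
theorem stmt_16 (ℓ : ℕ) (hℓ : 1 ≤ ℓ) (x : ℝ) (hx : |x| < 1) :
    (x * deriv (fun y : ℝ => y * deriv (fun z : ℝ => z ^ ℓ * (1 + z) / (1 - z) ^ (2 * ℓ + 1)) y) x)
        - (ℓ : ℝ) ^ 2 * (x ^ ℓ * (1 + x) / (1 - x) ^ (2 * ℓ + 1)) =
      (2 * ℓ + 2) * (2 * ℓ + 1) * (x ^ (ℓ + 1) * (1 + x) / (1 - x) ^ (2 * ℓ + 3)) := by
  obtain ⟨m, rfl⟩ : ∃ m, ℓ = m + 1 := ⟨ℓ - 1, (Nat.succ_pred_eq_of_pos hℓ).symm⟩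
  rw [abs_lt] at hx
  have hx1 : (1:ℝ) - x ≠ 0 := by linarith [hx.2]
  set D : ℝ → ℝ := fun z => z ^ m * (((m:ℝ)+1)*(1+z^2)+(2*(m:ℝ)+4)*z) / (1-z)^(2*m+4) with hD
  have hf : ∀ z : ℝ, 1 - z ≠ 0 →
      HasDerivAt (fun z : ℝ => z ^ (m+1) * (1 + z) / (1 - z) ^ (2 * (m+1) + 1)) (D z) z := by
    intro z hz
    have hnum : HasDerivAt (fun z : ℝ => z ^ (m+1) * (1 + z))
        (((m:ℝ)+1) * z ^ m * (1 + z) + z ^ (m+1) * 1) z := by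
      have h1 : HasDerivAt (fun z : ℝ => z ^ (m+1)) (((m:ℝ)+1) * z ^ m) z := by
        simpa using hasDerivAt_pow (m+1) z
      exact h1.mul ((hasDerivAt_id z).const_add 1)
    have hden : HasDerivAt (fun z : ℝ => (1 - z) ^ (2 * (m+1) + 1))
        ((2*(m:ℝ)+3) * (1 - z) ^ (2*m+2) * (-1)) z := by
      have h2 : HasDerivAt (fun z : ℝ => 1 - z) (-1) z := by
        simpa using (hasDerivAt_id z).const_sub 1
      have := h2.fun_pow (2 * (m+1) + 1)
      simpa [mul_comm, mul_assoc] using this.congr_deriv (by push_cast; ring_nf)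
    have hdz : (1 - z) ^ (2 * (m+1) + 1) ≠ 0 := pow_ne_zero _ hz
    have := hnum.fun_div hden hdz
    refine this.congr_deriv ?_
    rw [hD]
    field_simp
    ring
  have hxne : x ≠ 1 := by intro h; rw [h] at hx1; simp at hx1
  have hev : (fun y : ℝ => y * deriv (fun z : ℝ => z ^ (m+1) * (1 + z) / (1 - z) ^ (2 * (m+1) + 1)) y)
      =ᶠ[nhds x] (fun y : ℝ => y * D y) := by
    filter_upwards [eventually_ne_nhds hxne] with y hy
    have : (1:ℝ) - y ≠ 0 := sub_ne_zero.mpr (Ne.symm hy)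
    rw [(hf y this).deriv]
  have hgD : (fun y : ℝ => y * D y)
      = fun y : ℝ => y ^ (m+1) * (((m:ℝ)+1)*(1+y^2)+(2*(m:ℝ)+4)*y) / (1-y)^(2*m+4) := by
    funext y; rw [hD]; ring
  have hQ : HasDerivAt (fun y : ℝ => ((m:ℝ)+1)*(1+y^2)+(2*(m:ℝ)+4)*y)
      (((m:ℝ)+1)*(2*x) + (2*(m:ℝ)+4)) x := by
    have h1 : HasDerivAt (fun y : ℝ => (1:ℝ)+y^2) (2*x) x := by
      simpa using ((hasDerivAt_pow 2 x).const_add 1)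
    simpa using (h1.const_mul ((m:ℝ)+1)).fun_add ((hasDerivAt_id x).const_mul (2*(m:ℝ)+4))
  have hp : HasDerivAt (fun y : ℝ => y ^ (m+1)) (((m:ℝ)+1) * x ^ m) x := by
    simpa using hasDerivAt_pow (m+1) x
  have hnum2 := hp.fun_mul hQ
  have hden2 : HasDerivAt (fun y : ℝ => (1 - y) ^ (2*m+4))
      ((2*(m:ℝ)+4) * (1 - x) ^ (2*m+3) * (-1)) x := by
    have h2 : HasDerivAt (fun y : ℝ => 1 - y) (-1) x := by
      simpa using (hasDerivAt_id x).const_sub 1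
    have := h2.fun_pow (2*m+4)
    simpa [mul_comm, mul_assoc] using this.congr_deriv (by push_cast; ring_nf)
  have hdz2 : (1 - x) ^ (2*m+4) ≠ 0 := pow_ne_zero _ hx1
  have hg := (hnum2.fun_div hden2 hdz2)
  have hkey : deriv (fun y : ℝ => y * deriv (fun z : ℝ => z ^ (m+1) * (1 + z) / (1 - z) ^ (2 * (m+1) + 1)) y) x
      = ((((m:ℝ)+1) * x ^ m * (((m:ℝ)+1)*(1+x^2)+(2*(m:ℝ)+4)*x)
          + x ^ (m+1) * (((m:ℝ)+1)*(2*x) + (2*(m:ℝ)+4))) * (1 - x) ^ (2*m+4)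
          - x ^ (m+1) * (((m:ℝ)+1)*(1+x^2)+(2*(m:ℝ)+4)*x) * ((2*(m:ℝ)+4) * (1 - x) ^ (2*m+3) * (-1)))
        / ((1 - x) ^ (2*m+4)) ^ 2 := by
    rw [hev.deriv_eq, hgD, hg.deriv]
  rw [hkey]
  push_cast
  field_simp
  ring
end
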